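/- Let m, p be natural numbers, Q₁ a real m×m matrix with Q₁ᵀ = Q₁, Q₂ a real m×p matrix, and Q₄ a real p×p matrix with Q₄ invertible. Let i, j ∈ Fin m and set W' := (e_i - e_j)(e_i - e_j)ᵀ. Suppose λ : ℝ → ℝ and u : ℝ → ℝ^m are differentiable at 0, (Q_red + τ • W') *ᵥ u(τ) = λ(τ) • u(τ) for all τ, where Q_red = Q₁ - Q₂ Q₄⁻¹ Q₂ᵀ is assumed symmetric (Q_redᵀ = Q_red), and u(0) ⬝ᵥ u(0) = 1. Then λ'(0) = (u(0) i - u(0) j)²; in particular λ'(0) ≥ 0, i.e. adding a new line between two converter nodes can never decrease an eigenvalue of the Kron-reduced grounded Laplacian. -/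

import Mathlib

open Matrix

/-- Section IV-C of the paper: the sensitivity of an eigenvalue of the (symmetric)
Kron-reduced grounded Laplacian to a susceptance perturbation between two converter nodes
`i` and `j` (i.e. `W' = (e_i - e_j)(e_i - e_j)ᵀ`) equals `(u(0) i - u(0) j)² ≥ 0`;
adding a new line between two converter nodes can never decrease an eigenvalue of the
Kron-reduced grounded Laplacian. -/
theorem converter_sensitivity_nonneg {m p : ℕ}
    (Q1 : Matrix (Fin m) (Fin m) ℝ) (hQ1sym : Q1ᵀ = Q1)
    (Q2 : Matrix (Fin m) (Fin p) ℝ)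
    (Q4 : Matrix (Fin p) (Fin p) ℝ) (hQ4 : IsUnit Q4.det)
    (i j : Fin m)
    (W' : Matrix (Fin m) (Fin m) ℝ)
    (hW' : W' = vecMulVec (Pi.single i 1 - Pi.single j 1) (Pi.single i 1 - Pi.single j 1))
    (Qred : Matrix (Fin m) (Fin m) ℝ) (hQred : Qred = Q1 - Q2 * Q4⁻¹ * Q2ᵀ)
    (hQredsym : Qredᵀ = Qred)
    (lam : ℝ → ℝ) (u : ℝ → (Fin m → ℝ))
    (hlam : DifferentiableAt ℝ lam 0) (hu : DifferentiableAt ℝ u 0)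
    (heig : ∀ τ : ℝ, (Qred + τ • W') *ᵥ u τ = lam τ • u τ)
    (hnorm : u 0 ⬝ᵥ u 0 = 1) :
    deriv lam 0 = (u 0 i - u 0 j) ^ 2 ∧ 0 ≤ deriv lam 0 := by
  set v : Fin m → ℝ := deriv u 0 with hv
  have hud : HasDerivAt u v 0 := hu.hasDerivAt
  have hudc : ∀ k, HasDerivAt (fun τ => u τ k) (v k) 0 := fun k => (hasDerivAt_pi.mp hud) k
  have dotlem : ∀ c : Fin m → ℝ, HasDerivAt (fun τ => c ⬝ᵥ u τ) (c ⬝ᵥ v) 0 := by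
    intro c
    simp only [dotProduct]
    exact HasDerivAt.fun_sum (fun k _ => (hudc k).const_mul (c k))
  have h0 : Qred *ᵥ u 0 = lam 0 • u 0 := by simpa using heig 0
  have hF : HasDerivAt (fun τ => (u 0 ᵥ* Qred) ⬝ᵥ u τ + τ * ((u 0 ᵥ* W') ⬝ᵥ u τ))
      ((u 0 ᵥ* Qred) ⬝ᵥ v + (1 * ((u 0 ᵥ* W') ⬝ᵥ u 0) + 0 * ((u 0 ᵥ* W') ⬝ᵥ v))) 0 :=
    (dotlem _).add ((hasDerivAt_id 0).mul (dotlem _))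
  have hG : HasDerivAt (fun τ => lam τ * (u 0 ⬝ᵥ u τ))
      (deriv lam 0 * (u 0 ⬝ᵥ u 0) + lam 0 * (u 0 ⬝ᵥ v)) 0 :=
    hlam.hasDerivAt.mul (dotlem _)
  have hfun : (fun τ => (u 0 ᵥ* Qred) ⬝ᵥ u τ + τ * ((u 0 ᵥ* W') ⬝ᵥ u τ))
      = (fun τ => lam τ * (u 0 ⬝ᵥ u τ)) := by
    funext τ
    have := congrArg (fun x => u 0 ⬝ᵥ x) (heig τ)
    simp only [add_mulVec, smul_mulVec, dotProduct_add, dotProduct_smul,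
      smul_eq_mul, dotProduct_mulVec] at this ⊢
    linarith [this]
  have hkey := hF.unique (hfun ▸ hG)
  have hsym : u 0 ᵥ* Qred = lam 0 • u 0 := by
    rw [← hQredsym, vecMul_transpose]; exact h0
  rw [hsym, hnorm] at hkey
  have hsW : (u 0 ᵥ* W') ⬝ᵥ u 0 = u 0 ⬝ᵥ (W' *ᵥ u 0) := (dotProduct_mulVec _ _ _).symm
  have hWcalc : u 0 ⬝ᵥ (W' *ᵥ u 0) = (u 0 i - u 0 j) ^ 2 := by
    subst hW'
    set w : Fin m → ℝ := Pi.single i 1 - Pi.single j 1 with hw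
    have h1 : (vecMulVec w w) *ᵥ u 0 = (w ⬝ᵥ u 0) • w := by
      funext k
      simp only [mulVec, dotProduct, vecMulVec_apply, Pi.smul_apply, smul_eq_mul,
        Finset.sum_mul, Finset.mul_sum]
      exact Finset.sum_congr rfl fun b _ => by ring
    have hwu : w ⬝ᵥ u 0 = u 0 i - u 0 j := by
      simp [hw, sub_dotProduct, single_dotProduct]
    have hwu' : u 0 ⬝ᵥ w = u 0 i - u 0 j := by
      simp [hw, dotProduct_sub, dotProduct_single]
    rw [h1, dotProduct_smul, smul_eq_mul, hwu, hwu']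
    ring
  have hderiv : deriv lam 0 = (u 0 i - u 0 j) ^ 2 := by
    rw [hsW, hWcalc] at hkey
    have : (lam 0 • u 0) ⬝ᵥ v = lam 0 * (u 0 ⬝ᵥ v) := smul_dotProduct _ _ _
    linarith [hkey, this]
  exact ⟨hderiv, hderiv ▸ sq_nonneg _⟩
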